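/- The converse of 'qo(L) is a wqo implies L has finite elasticity' fails: the set system of singletons {{n} : n ∈ ℕ} has dimension 1 (hence finite elasticity), but its induced quasi-order is equality on ℕ, which has an infinite bad sequence and thus is not a wqo. -/

import Mathlib

/-- A set system has finite elasticity if it has no infinite elasticity. -/
def FiniteElasticity {X : Type*} (𝓛 : Set (Set X)) : Prop :=
  ¬ ∃ (t : ℕ → X) (L : ℕ → Set X),
      (∀ i, L i ∈ 𝓛) ∧ (∀ i j, j ≤ i → t j ∈ L i) ∧ (∀ i, t (i + 1) ∉ L i)

/-- The quasi-order induced by a set system: `x ≼ y` iff every member of `𝓛`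
containing `x` contains `y`. -/
def qoRel {X : Type*} (𝓛 : Set (Set X)) (x y : X) : Prop :=
  ∀ L ∈ 𝓛, x ∈ L → y ∈ L

/-- The child relation of a tree of finite sequences: `a` is an immediate extension of `b`
lying in `T`.  The rank of the tree is the `Acc.rank` of the root `[]`. -/
def childRel {A : Type*} (T : Set (List A)) (a b : List A) : Prop :=
  a ∈ T ∧ ∃ x : A, a = b ++ [x]

/-- A (finite) bad sequence: `t i ⋠ t j` whenever `i < j`. -/
def IsBadSeq {X : Type*} (r : X → X → Prop) (t : List X) : Prop :=
  t.Pairwise fun a b => ¬ r a b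

/-- A production sequence `⟨(t₀, L₁), …, (t_{l-1}, L_l)⟩` of the set system `𝓛`:
each `Lᵢ ∈ 𝓛`, `{t₀, …, t_{i-1}} ⊆ Lᵢ`, and `tᵢ ∉ Lᵢ`. -/
def IsProdSeq {X : Type*} (𝓛 : Set (Set X)) (p : List (X × Set X)) : Prop :=
  (∀ (i : ℕ) (hi : i < p.length), (p.get ⟨i, hi⟩).2 ∈ 𝓛) ∧
  (∀ (i j : ℕ) (hi : i < p.length) (hj : j ≤ i),
    (p.get ⟨j, by omega⟩).1 ∈ (p.get ⟨i, hi⟩).2) ∧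
  (∀ (i : ℕ) (hi : i + 1 < p.length),
    (p.get ⟨i + 1, hi⟩).1 ∉ (p.get ⟨i, by omega⟩).2)

/-- The set system of singletons over ℕ. -/
def SGL : Set (Set ℕ) := {S : Set ℕ | ∃ n : ℕ, S = {n}}

lemma prodSeq_len_le (p : List (ℕ × Set ℕ)) (hp : IsProdSeq SGL p) : p.length ≤ 1 := by
  by_contra h
  push_neg at h
  obtain ⟨h1, h2, h3⟩ := hp
  have h0 : 0 < p.length := by omega
  obtain ⟨m, hm⟩ := h1 1 h
  have ht00 : (p.get ⟨0, h0⟩).1 ∈ (p.get ⟨0, h0⟩).2 := h2 0 0 h0 le_rfl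
  have ht01 : (p.get ⟨0, h0⟩).1 ∈ (p.get ⟨1, h⟩).2 := h2 1 0 h (by omega)
  have ht11 : (p.get ⟨1, h⟩).1 ∈ (p.get ⟨1, h⟩).2 := h2 1 1 h le_rfl
  have ht10 : (p.get ⟨1, h⟩).1 ∉ (p.get ⟨0, h0⟩).2 := h3 0 h
  rw [hm] at ht01 ht11
  simp only [Set.mem_singleton_iff] at ht01 ht11
  rw [ht11, ← ht01] at ht10
  exact ht10 ht00

lemma single_mem (n : ℕ) : IsProdSeq SGL [(n, ({n} : Set ℕ))] := by
  refine ⟨?_, ?_, ?_⟩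
  · intro i hi
    simp only [List.length_singleton] at hi
    interval_cases i
    exact ⟨n, rfl⟩
  · intro i j hi hj
    simp only [List.length_singleton] at hi
    interval_cases i
    interval_cases j
    simp
  · intro i hi
    simp at hi

lemma rank_zero_of_nonnil (c : List (ℕ × Set ℕ)) (hc : c ≠ [])
    (h : Acc (childRel {p : List (ℕ × Set ℕ) | IsProdSeq SGL p}) c) : h.rank = 0 := by
  rw [Acc.rank_eq]
  haveI : IsEmpty {b // childRel {p : List (ℕ × Set ℕ) | IsProdSeq SGL p} b c} := by
    constructor
    rintro ⟨b, hbT, x, rfl⟩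
    have := prodSeq_len_le _ hbT
    simp at this
    exact hc this
  exact ciSup_of_empty _

theorem stmt15 :
    FiniteElasticity SGL ∧
    (∀ h : Acc (childRel {p : List (ℕ × Set ℕ) | IsProdSeq SGL p}) [], h.rank = 1) ∧
    (∀ x y : ℕ, qoRel SGL x y ↔ x = y) ∧
    (∃ t : ℕ → ℕ, ∀ i j : ℕ, i < j → ¬ qoRel SGL (t i) (t j)) := by
  constructor
  · rintro ⟨t, L, hL, hji, hnotin⟩
    obtain ⟨m, hm⟩ := hL 1
    have h0 : t 0 ∈ L 1 := hji 1 0 (by omega)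
    have h1 : t 1 ∈ L 1 := hji 1 1 le_rfl
    rw [hm] at h0 h1
    simp only [Set.mem_singleton_iff] at h0 h1
    have := hnotin 0
    rw [h1, ← h0] at this
    exact this (hji 0 0 le_rfl)
  refine ⟨?_, ?_, ?_⟩
  · intro h
    rw [Acc.rank_eq]
    apply le_antisymm
    · apply Ordinal.iSup_le
      rintro ⟨b, hbT, x, rfl⟩
      rw [rank_zero_of_nonnil ([] ++ [x]) (by simp) _]
      rw [Ordinal.succ_zero]
    · have hmem : childRel {p : List (ℕ × Set ℕ) | IsProdSeq SGL p}
          [((0 : ℕ), ({0} : Set ℕ))] [] := ⟨single_mem 0, ⟨(0, {0}), rfl⟩⟩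
      calc (1 : Ordinal) = Order.succ (0 : Ordinal) := Ordinal.succ_zero.symm
        _ ≤ Order.succ ((h.inv hmem).rank) := Order.succ_le_succ zero_le
        _ ≤ _ := Ordinal.le_iSup (fun b : {b // childRel _ b []} => Order.succ ((h.inv b.2).rank)) ⟨_, hmem⟩
  · intro x y
    constructor
    · intro hq
      have := hq {x} ⟨x, rfl⟩ rfl
      exact this.symm
    · rintro rfl
      intro L _ hx
      exact hx
  · exact ⟨id, fun i j hij hq => by
      have := hq {i} ⟨i, rfl⟩ rfl
      simp at this
      omega⟩
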